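/- Extension of real-valued characters: Let G be an abelian group and Q ⊆ P ⊆ G submonoids such that Q generates G as a group (hence so does P), Q is finitely generated, and Q is saturated in G (for all g ∈ G and integers n > 0, n • g ∈ Q implies g ∈ Q); thus Q is an fs monoid and the inclusion Q ⊆ P induces an isomorphism on Grothendieck groups. Let x : Q → ℝ be a monoid homomorphism into the multiplicative monoid of ℝ. If there exists a monoid homomorphism y : P → ℂ (into the multiplicative monoid of ℂ) whose restriction to Q is x (composed with the inclusion ℝ ⊆ ℂ), then there exists a monoid homomorphism z : P → ℝ whose restriction to Q is x. -/

import Mathlib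

open Multiplicative

namespace ExtendRealCharAux

lemma rsign_mul (u v : ℝ) : Real.sign (u * v) = Real.sign u * Real.sign v := by
  rcases lt_trichotomy u 0 with hu | hu | hu <;>
  rcases lt_trichotomy v 0 with hv | hv | hv <;>
  simp [hu, hv, Real.sign_of_neg, Real.sign_of_pos, Real.sign_zero,
    mul_pos_of_neg_of_neg, mul_neg_of_neg_of_pos, mul_neg_of_pos_of_neg, mul_pos]

lemma rsign_sq {u : ℝ} (hu : u ≠ 0) : Real.sign u * Real.sign u = 1 := by
  rcases Real.sign_apply_eq_of_ne_zero u hu with h | h <;> rw [h] <;> norm_num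

lemma abs_mul_rsign (u : ℝ) : |u| * Real.sign u = u := by
  rcases lt_trichotomy u 0 with hu | hu | hu
  · rw [Real.sign_of_neg hu, abs_of_neg hu]; ring
  · simp [hu]
  · rw [Real.sign_of_pos hu, abs_of_pos hu]; ring

variable {G : Type*} [AddCommGroup G] (Q : AddSubmonoid G) (x : Multiplicative Q →* ℝ)

open scoped Classical in
noncomputable def X : G → ℝ := fun g => if h : g ∈ Q then x (ofAdd (⟨g, h⟩ : Q)) else 0

lemma X_mem {g : G} (h : g ∈ Q) : X Q x g = x (ofAdd (⟨g, h⟩ : Q)) := dif_pos h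

lemma X_zero : X Q x 0 = 1 := by
  rw [X_mem Q x Q.zero_mem, show (⟨(0:G), Q.zero_mem⟩ : Q) = 0 from rfl, ofAdd_zero, map_one]

lemma X_add {a b : G} (ha : a ∈ Q) (hb : b ∈ Q) :
    X Q x (a + b) = X Q x a * X Q x b := by
  rw [X_mem Q x (Q.add_mem ha hb), X_mem Q x ha, X_mem Q x hb,
    show (⟨a + b, Q.add_mem ha hb⟩ : Q) = ⟨a, ha⟩ + ⟨b, hb⟩ from rfl, ofAdd_add, map_mul]

lemma X_nsmul {a : G} (ha : a ∈ Q) (n : ℕ) : X Q x (n • a) = (X Q x a) ^ n := by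
  induction n with
  | zero => simpa using X_zero Q x
  | succ n ih => rw [succ_nsmul, X_add Q x (Q.nsmul_mem ha n) ha, ih, pow_succ]


def Fc : G → Prop := fun g => g ∈ Q ∧ X Q x g ≠ 0

lemma Fc_zero : Fc Q x 0 := ⟨Q.zero_mem, by rw [X_zero]; norm_num⟩

lemma Fc_add {a b : G} (ha : Fc Q x a) (hb : Fc Q x b) : Fc Q x (a + b) :=
  ⟨Q.add_mem ha.1 hb.1, by rw [X_add Q x ha.1 hb.1]; exact mul_ne_zero ha.2 hb.2⟩

noncomputable def sg : G → ℝ := fun g => Real.sign (X Q x g)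

lemma sg_add {a b : G} (ha : a ∈ Q) (hb : b ∈ Q) :
    sg Q x (a + b) = sg Q x a * sg Q x b := by
  rw [sg, sg, sg, X_add Q x ha hb, rsign_mul]

lemma sg_sq {a : G} (ha : Fc Q x a) : sg Q x a * sg Q x a = 1 := rsign_sq ha.2

def H : AddSubgroup G where
  carrier := {g | ∃ a b : G, Fc Q x a ∧ Fc Q x b ∧ g = a - b}
  zero_mem' := ⟨0, 0, Fc_zero Q x, Fc_zero Q x, by abel⟩
  add_mem' := by
    rintro g g' ⟨a, b, ha, hb, rfl⟩ ⟨c, d, hc, hd, rfl⟩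
    exact ⟨a + c, b + d, Fc_add Q x ha hc, Fc_add Q x hb hd, by abel⟩
  neg_mem' := by
    rintro g ⟨a, b, ha, hb, rfl⟩
    exact ⟨b, a, hb, ha, by abel⟩

lemma Fc_mem_H {g : G} (hg : Fc Q x g) : g ∈ H Q x :=
  ⟨g, 0, hg, Fc_zero Q x, by abel⟩

lemma H_sat (hsat : ∀ (g : G) (n : ℕ), 0 < n → n • g ∈ Q → g ∈ Q)
    {g : G} {n : ℕ} (hn : 0 < n) (h : n • g ∈ H Q x) : g ∈ H Q x := by
  obtain ⟨a, b, ha, hb, hab⟩ := h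
  have key : n • (g + b) = a + (n - 1) • b := by
    have h1 : n • b = (n - 1) • b + b := by
      nth_rewrite 1 [show n = (n-1) + 1 from (Nat.succ_pred_eq_of_pos hn).symm]
      rw [succ_nsmul]
    rw [smul_add, hab, h1]; abel
  have hgbQ : g + b ∈ Q := by
    refine hsat _ n hn ?_
    rw [key]; exact Q.add_mem ha.1 (Q.nsmul_mem hb.1 _)
  have hgbF : Fc Q x (g + b) := by
    refine ⟨hgbQ, ?_⟩
    intro h0
    have : X Q x (n • (g + b)) = 0 := by rw [X_nsmul Q x hgbQ, h0, zero_pow hn.ne']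
    rw [key, X_add Q x ha.1 (Q.nsmul_mem hb.1 _), X_nsmul Q x hb.1] at this
    exact (mul_ne_zero ha.2 (pow_ne_zero _ hb.2)) this
  exact ⟨g + b, b, hgbF, hb, by abel⟩

open scoped Classical in
noncomputable def tau : G → ℝ := fun g =>
  if h : g ∈ H Q x then
    sg Q x h.choose * sg Q x h.choose_spec.choose
  else 1

lemma tau_eq {g a b : G} (ha : Fc Q x a) (hb : Fc Q x b) (hab : g = a - b) :
    tau Q x g = sg Q x a * sg Q x b := by
  have hg : g ∈ H Q x := ⟨a, b, ha, hb, hab⟩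
  rw [tau, dif_pos hg]
  obtain ⟨ha0, hb0, he⟩ := hg.choose_spec.choose_spec
  set a0 := hg.choose
  set b0 := hg.choose_spec.choose
  have hkey : a0 + b = a + b0 := by
    have : a - b = a0 - b0 := by rw [← hab, ← he]
    rw [sub_eq_sub_iff_add_eq_add] at this
    linear_combination (norm := abel) this.symm
  have e : sg Q x a0 * sg Q x b = sg Q x a * sg Q x b0 := by
    rw [← sg_add Q x ha0.1 hb.1, ← sg_add Q x ha.1 hb0.1, hkey]
  have h1 := sg_sq Q x hb
  have h2 := sg_sq Q x hb0
  linear_combination (sg Q x b * sg Q x b0) * e - (sg Q x a0 * sg Q x b0) * h1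
    + (sg Q x a * sg Q x b) * h2

lemma tau_zero : tau Q x 0 = 1 := by
  rw [tau_eq Q x (Fc_zero Q x) (Fc_zero Q x) (by abel)]
  exact sg_sq Q x (Fc_zero Q x)

lemma tau_add {g g' : G} (hg : g ∈ H Q x) (hg' : g' ∈ H Q x) :
    tau Q x (g + g') = tau Q x g * tau Q x g' := by
  obtain ⟨a, b, ha, hb, rfl⟩ := hg
  obtain ⟨c, d, hc, hd, rfl⟩ := hg'
  rw [tau_eq Q x ha hb rfl, tau_eq Q x hc hd rfl,
    tau_eq Q x (Fc_add Q x ha hc) (Fc_add Q x hb hd) (by abel),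
    sg_add Q x ha.1 hc.1, sg_add Q x hb.1 hd.1]
  ring

lemma tau_Fc {g : G} (hg : Fc Q x g) : tau Q x g = Real.sign (X Q x g) := by
  rw [tau_eq Q x hg (Fc_zero Q x) (by abel), show sg Q x 0 = 1 from ?_, mul_one]
  · rfl
  · rw [sg, X_zero]; exact Real.sign_one

end ExtendRealCharAux

open ExtendRealCharAux


/-- **Extension of real-valued characters.** Let `G` be an abelian group and
`Q ⊆ P ⊆ G` submonoids with `Q` finitely generated, saturated in `G`, and generating `G`
as a group (so `Q` is fs and `Q ⊆ P` induces an isomorphism on Grothendieck groups).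
Let `x : Q → (ℝ, ·)` be a monoid homomorphism.  If `x` (viewed in `ℂ`) extends to a monoid
homomorphism `y : P → (ℂ, ·)`, then `x` extends to a monoid homomorphism
`z : P → (ℝ, ·)`. -/
theorem extend_real_character
    (G : Type*) [AddCommGroup G] (Q P : AddSubmonoid G) (hQP : Q ≤ P)
    (hgen : AddSubgroup.closure (Q : Set G) = ⊤)
    (hQfg : Q.FG)
    (hsat : ∀ (g : G) (n : ℕ), 0 < n → n • g ∈ Q → g ∈ Q)
    (x : Multiplicative Q →* ℝ)
    (y : Multiplicative P →* ℂ)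
    (hy : ∀ q : Q, y (Multiplicative.ofAdd (AddSubmonoid.inclusion hQP q)) =
      ((x (Multiplicative.ofAdd q) : ℝ) : ℂ)) :
    ∃ z : Multiplicative P →* ℝ, ∀ q : Q,
      z (Multiplicative.ofAdd (AddSubmonoid.inclusion hQP q)) =
        x (Multiplicative.ofAdd q) := by
  classical
  -- G is a finitely generated ℤ-module
  obtain ⟨S, hS⟩ := hQfg
  haveI : Module.Finite ℤ G := by
    refine ⟨⟨S, ?_⟩⟩
    rw [eq_top_iff]
    intro g _
    have hQle : (Q : Set G) ⊆ (Submodule.span ℤ (S : Set G) : Set G) := by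
      rw [← hS]
      exact AddSubmonoid.closure_le.2 Submodule.subset_span
    have : AddSubgroup.closure (Q : Set G) ≤ (Submodule.span ℤ (S : Set G)).toAddSubgroup :=
      AddSubgroup.closure_le _ |>.2 hQle
    rw [hgen] at this
    exact this (AddSubgroup.mem_top g)
  set N : Submodule ℤ G := AddSubgroup.toIntSubmodule (H Q x) with hN
  have hmemN : ∀ g : G, g ∈ N ↔ g ∈ H Q x := fun g => Iff.rfl
  -- quotient is torsion-free
  haveI : NoZeroSMulDivisors ℤ (G ⧸ N) := by
    refine ⟨fun {c g} hcg => ?_⟩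
    by_cases hc : c = 0
    · exact Or.inl hc
    · refine Or.inr ?_
      obtain ⟨g, rfl⟩ := N.mkQ_surjective g
      rw [← map_smul, Submodule.mkQ_apply, Submodule.Quotient.mk_eq_zero] at hcg
      rw [Submodule.mkQ_apply, Submodule.Quotient.mk_eq_zero]
      have hcH : c • g ∈ H Q x := hcg
      have hnat : (c.natAbs : ℕ) • g ∈ H Q x := by
        rcases Int.natAbs_eq c with h | h
        · rw [← natCast_zsmul, ← h]; exact hcH
        · rw [← natCast_zsmul, show ((c.natAbs : ℤ)) • g = -(c • g) by rw [h]; simp [neg_smul]]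
          exact (H Q x).neg_mem hcH
      exact (hmemN g).2 (H_sat Q x hsat (Int.natAbs_pos.2 hc) hnat)
  haveI : Module.Finite ℤ (G ⧸ N) := Module.Finite.of_surjective N.mkQ N.mkQ_surjective
  haveI : Module.Free ℤ (G ⧸ N) := Module.free_of_finite_type_torsion_free'
  obtain ⟨s, hs⟩ := Module.projective_lifting_property N.mkQ (LinearMap.id) N.mkQ_surjective
  -- retraction onto H
  set r : G → G := fun g => g - s (N.mkQ g) with hr
  have hrH : ∀ g : G, r g ∈ H Q x := by
    intro g
    have : N.mkQ (g - s (N.mkQ g)) = 0 := by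
      rw [map_sub]
      have := congrArg (fun f => f (N.mkQ g)) hs
      simp only [LinearMap.comp_apply, LinearMap.id_apply] at this
      rw [this, sub_self]
    rw [Submodule.mkQ_apply, Submodule.Quotient.mk_eq_zero] at this
    exact this
  have hradd : ∀ g g' : G, r (g + g') = r g + r g' := by
    intro g g'; simp only [hr, map_add]; abel
  have hrid : ∀ g ∈ H Q x, r g = g := by
    intro g hg
    have h0 : N.mkQ g = 0 := by rw [Submodule.mkQ_apply, Submodule.Quotient.mk_eq_zero]; exact hg
    simp only [hr]
    rw [h0, map_zero, sub_zero]
  have hr0 : r 0 = 0 := by simp [hr]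
  -- the character
  refine ⟨{ toFun := fun p => ‖y p‖ * tau Q x (r ((p.toAdd : P) : G)),
            map_one' := ?_, map_mul' := ?_ }, ?_⟩
  · rw [map_one, norm_one, show (((1 : Multiplicative P).toAdd : P) : G) = 0 from rfl,
      hr0, tau_zero, mul_one]
  · intro p p'
    rw [map_mul, norm_mul,
      show (((p * p').toAdd : P) : G) = ((p.toAdd : P) : G) + ((p'.toAdd : P) : G) from rfl,
      hradd, tau_add Q x (hrH _) (hrH _)]
    ring
  · intro q
    dsimp only [MonoidHom.coe_mk, OneHom.coe_mk]
    rw [hy q, toAdd_ofAdd]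
    have hcoe : ((AddSubmonoid.inclusion hQP q : P) : G) = (q : G) := rfl
    rw [hcoe, Complex.norm_real, Real.norm_eq_abs]
    have hXq : X Q x (q : G) = x (Multiplicative.ofAdd q) := by
      rw [X_mem Q x q.2]
    by_cases hx0 : x (Multiplicative.ofAdd q) = 0
    · rw [hx0, abs_zero, zero_mul]
    · have hF : Fc Q x (q : G) := ⟨q.2, by rw [hXq]; exact hx0⟩
      rw [hrid _ (Fc_mem_H Q x hF), tau_Fc Q x hF, hXq]
      exact abs_mul_rsign _
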